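/- Let A₀, A₁, …, A_n be finite non-empty subsets of an abelian group. Then |A₀|^{n−1} · |A₁ + ⋯ + A_n| ≤ |A₀ + A₁| · |A₀ + A₂| ⋯ |A₀ + A_n| (Ruzsa sum triangle inequality, iterated form). -/

import Mathlib

open Finset Pointwise

section Aux

variable {ι : Type*} [Fintype ι] [DecidableEq ι]

/-- piFinset of a pointwise sum of families is the sum of the piFinsets. -/
lemma piFinset_sum_eq {H : Type*} [AddCommMonoid H] [DecidableEq H]
    {κ : Type*} (s : Finset κ) (F : κ → ι → Finset H) :
    Fintype.piFinset (fun i => ∑ j ∈ s, F j i) = ∑ j ∈ s, Fintype.piFinset (F j) := by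
  classical
  induction s using Finset.cons_induction with
  | empty =>
      simp only [Finset.sum_empty]
      ext f
      simp [Fintype.mem_piFinset, Finset.mem_zero, funext_iff]
  | cons a s ha ih =>
      simp only [Finset.sum_cons, Fintype.piFinset_add, ih]

lemma sum_finset_subset_sum {H : Type*} [AddCommMonoid H] [DecidableEq H]
    {κ : Type*} (s : Finset κ) (F T : κ → Finset H) (h : ∀ j ∈ s, F j ⊆ T j) :
    ∑ j ∈ s, F j ⊆ ∑ j ∈ s, T j := by
  classical
  induction s using Finset.cons_induction with
  | empty => simp
  | cons a s ha ih =>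
      simp only [Finset.sum_cons]
      exact Finset.add_subset_add (h a (Finset.mem_cons_self a s))
        (ih fun j hj => h j (Finset.mem_cons_of_mem hj))

/-- `y^t * (y + t) ≤ (y+1)^t * y`, a crude binomial bound. -/
lemma pow_mul_add_le (y : ℕ) : ∀ t : ℕ, y ^ t * (y + t) ≤ (y + 1) ^ t * y := by
  intro t
  induction t with
  | zero => simp
  | succ t ih =>
      calc y ^ (t + 1) * (y + (t + 1)) = y * (y ^ t * (y + t)) + y ^ t * y := by ring
        _ ≤ y * ((y + 1) ^ t * y) + (y + 1) ^ t * y := by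
            exact Nat.add_le_add (Nat.mul_le_mul_left y ih)
              (Nat.mul_le_mul_right y (Nat.pow_le_pow_left (by omega) t))
        _ = (y + 1) ^ (t + 1) * y := by ring

lemma nat_le_of_forall_pow_le {x y c : ℕ} (h : ∀ t : ℕ, 1 ≤ t → x ^ t ≤ c * y ^ t) :
    x ≤ y := by
  by_contra hxy
  push_neg at hxy
  rcases Nat.eq_zero_or_pos y with rfl | hy
  · have h1 := h 1 le_rfl
    simp at h1
    omega
  · set t := c * y + 1 with ht
    have h1 : x ^ t ≤ c * y ^ t := h t (by omega)
    have h2 : (y + 1) ^ t ≤ x ^ t := Nat.pow_le_pow_left (by omega) t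
    have h3 : y ^ t * (y + t) ≤ (y + 1) ^ t * y := pow_mul_add_le y t
    have h4 : c * y ^ t * y < y ^ t * (y + t) := by
      have hyt : 0 < y ^ t := Nat.pow_pos (n := t) hy
      calc c * y ^ t * y = y ^ t * (c * y) := by ring
        _ < y ^ t * (y + t) := by
            exact mul_lt_mul_of_pos_left (by omega : c * y < y + t) hyt
    have h5 : c * y ^ t * y < x ^ t * y := by
      calc c * y ^ t * y < y ^ t * (y + t) := h4
        _ ≤ (y + 1) ^ t * y := h3
        _ ≤ x ^ t * y := Nat.mul_le_mul_right y h2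
    have h6 : c * y ^ t < x ^ t := Nat.lt_of_mul_lt_mul_right h5
    omega

end Aux

/-- Lossy different-summands Plünnecke: `|A₁+⋯+Aₙ| |B|^{n-1} ≤ n ∏ |B+Aᵢ|`. -/
lemma lossy_ruzsa {H : Type*} [AddCommGroup H] [DecidableEq H]
    (n : ℕ) (hn : 1 ≤ n) (B : Finset H) (A : Fin n → Finset H) (hB : B.Nonempty) :
    (∑ i, A i).card * B.card ^ (n - 1) ≤ n * ∏ i, (B + A i).card := by
  classical
  haveI : NeZero n := ⟨by omega⟩
  -- work in the product group
  set P : Fin n → Finset (Fin n → H) :=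
    fun j => Fintype.piFinset (fun i => A (i + j)) with hP
  set D : Finset (Fin n → H) := Finset.univ.biUnion P with hD
  set B' : Finset (Fin n → H) := Fintype.piFinset (fun _ => B) with hB'
  have hB'ne : B'.Nonempty := by
    obtain ⟨b, hb⟩ := hB
    exact ⟨fun _ => b, by simp [hB', Fintype.mem_piFinset, hb]⟩
  -- the diagonal power of the total sumset sits inside n • D
  have hsub : Fintype.piFinset (fun _ : Fin n => ∑ k, A k) ⊆ n • D := by
    have e1 : (fun i : Fin n => ∑ k, A k) = fun i : Fin n => ∑ j : Fin n, A (i + j) := by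
      funext i
      exact (Fintype.sum_equiv (Equiv.addLeft i) _ _ (fun j => rfl)).symm
    rw [e1, piFinset_sum_eq]
    have e2 : ∑ j : Fin n, P j ⊆ ∑ _j : Fin n, D :=
      sum_finset_subset_sum _ _ _ (fun j _ => Finset.subset_biUnion_of_mem P (Finset.mem_univ j))
    refine e2.trans ?_
    rw [Finset.sum_const, Finset.card_univ, Fintype.card_fin]
  -- card bounds
  have hcardP : ∀ j, (B' + P j).card = ∏ k, (B + A k).card := by
    intro j
    have : B' + P j = Fintype.piFinset (fun i => B + A (i + j)) := by
      rw [hB', hP, ← Fintype.piFinset_add]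
    rw [this, Fintype.card_piFinset]
    exact Fintype.prod_equiv (Equiv.addRight j) _ _ (fun i => rfl)
  have hBD : (B' + D).card ≤ n * ∏ k, (B + A k).card := by
    have hsub2 : B' + D ⊆ Finset.univ.biUnion (fun j => B' + P j) := by
      intro x hx
      rw [Finset.mem_add] at hx
      obtain ⟨b, hb, d, hd, rfl⟩ := hx
      rw [hD, Finset.mem_biUnion] at hd
      obtain ⟨j, -, hdj⟩ := hd
      exact Finset.mem_biUnion.2 ⟨j, Finset.mem_univ j, Finset.add_mem_add hb hdj⟩
    calc (B' + D).card ≤ (Finset.univ.biUnion (fun j => B' + P j)).card :=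
          Finset.card_le_card hsub2
      _ ≤ ∑ j : Fin n, (B' + P j).card := Finset.card_biUnion_le
      _ = n * ∏ k, (B + A k).card := by
          simp only [hcardP, Finset.sum_const, Finset.card_univ, Fintype.card_fin, smul_eq_mul]
  -- Plünnecke–Ruzsa in the product group
  have hplu := Finset.pluennecke_ruzsa_inequality_nsmul_add hB'ne D n
  have hB'card : B'.card = B.card ^ n := Fintype.card_piFinset_const B n
  have hB'pos : 0 < B'.card := Finset.card_pos.2 hB'ne
  -- turn Plünnecke into a ℕ inequality
  have hmain : (n • D).card * B'.card ^ n ≤ (B' + D).card ^ n * B'.card := by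
    have hb0 : ((B'.card : ℚ≥0)) ≠ 0 := by positivity
    have : ((n • D).card : ℚ≥0) * (B'.card : ℚ≥0) ^ n
        ≤ ((B' + D).card : ℚ≥0) ^ n * B'.card := by
      calc ((n • D).card : ℚ≥0) * (B'.card : ℚ≥0) ^ n
          ≤ (((B' + D).card : ℚ≥0) / B'.card) ^ n * B'.card * (B'.card : ℚ≥0) ^ n := by
            exact mul_le_mul_left hplu _
        _ = ((B' + D).card : ℚ≥0) ^ n * B'.card := by
            rw [div_pow]
            field_simp
    exact_mod_cast this
  -- assemble
  have key : ((∑ i, A i).card * B.card ^ (n - 1)) ^ n ≤ (n * ∏ i, (B + A i).card) ^ n := by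
    have hdiag : ((∑ i, A i).card) ^ n ≤ (n • D).card := by
      calc ((∑ i, A i).card) ^ n = (Fintype.piFinset (fun _ : Fin n => ∑ k, A k)).card :=
            (Fintype.card_piFinset_const _ n).symm
        _ ≤ (n • D).card := Finset.card_le_card hsub
    have hexp : (n - 1) * n + n = n * n := by
      cases n with
      | zero => omega
      | succ m => simp only [Nat.succ_sub_one]; ring
    have : ((∑ i, A i).card * B.card ^ (n - 1)) ^ n * B.card ^ n
        ≤ (n * ∏ i, (B + A i).card) ^ n * B.card ^ n := by
      calc ((∑ i, A i).card * B.card ^ (n - 1)) ^ n * B.card ^ n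
          = ((∑ i, A i).card) ^ n * (B.card ^ ((n-1) * n + n)) := by
            rw [mul_pow, ← pow_mul, mul_assoc, ← pow_add]
        _ = ((∑ i, A i).card) ^ n * B'.card ^ n := by
            rw [hexp, hB'card, ← pow_mul]
        _ ≤ (n • D).card * B'.card ^ n := by
            exact Nat.mul_le_mul_right _ hdiag
        _ ≤ (B' + D).card ^ n * B'.card := hmain
        _ ≤ (n * ∏ i, (B + A i).card) ^ n * B'.card := by
            exact Nat.mul_le_mul_right _ (Nat.pow_le_pow_left hBD n)
        _ = (n * ∏ i, (B + A i).card) ^ n * B.card ^ n := by rw [hB'card]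
    exact Nat.le_of_mul_le_mul_right this (Nat.pow_pos (n := n) (Finset.card_pos.2 hB))
  exact (Nat.pow_le_pow_iff_left (by omega)).1 key

/-- Exact different-summands Plünnecke via the tensor power trick. -/
lemma exact_ruzsa {G : Type*} [AddCommGroup G] [DecidableEq G]
    (n : ℕ) (hn : 1 ≤ n) (B : Finset G) (A : Fin n → Finset G) (hB : B.Nonempty) :
    (∑ i, A i).card * B.card ^ (n - 1) ≤ ∏ i, (B + A i).card := by
  classical
  apply nat_le_of_forall_pow_le (c := n)
  intro t ht
  -- apply the lossy bound in the `t`-th tensor power group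
  have key := lossy_ruzsa (H := Fin t → G) n hn
      (Fintype.piFinset (fun _ => B)) (fun i => Fintype.piFinset (fun _ => A i))
      (by obtain ⟨b, hb⟩ := hB; exact ⟨fun _ => b, by simp [Fintype.mem_piFinset, hb]⟩)
  have e1 : (∑ i, Fintype.piFinset (fun _ : Fin t => A i))
      = Fintype.piFinset (fun _ : Fin t => ∑ i, A i) := by
    rw [piFinset_sum_eq]
  rw [e1, Fintype.card_piFinset_const, Fintype.card_piFinset_const] at key
  have e2 : ∀ i, Fintype.piFinset (fun _ : Fin t => B) + Fintype.piFinset (fun _ : Fin t => A i)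
      = Fintype.piFinset (fun _ : Fin t => B + A i) := by
    intro i
    rw [← Fintype.piFinset_add]
  simp only [e2, Fintype.card_piFinset_const] at key
  calc ((∑ i, A i).card * B.card ^ (n - 1)) ^ t
      = (∑ i, A i).card ^ t * (B.card ^ t) ^ (n - 1) := by
        rw [mul_pow, ← pow_mul, ← pow_mul, Nat.mul_comm t (n-1)]
    _ ≤ n * ∏ i, (B + A i).card ^ t := key
    _ = n * (∏ i, (B + A i).card) ^ t := by rw [Finset.prod_pow]

theorem stmt5 {G : Type*} [AddCommGroup G] [DecidableEq G]
    (n : ℕ) (hn : 1 ≤ n) (A₀ : Finset G) (A : Fin n → Finset G)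
    (h₀ : A₀.Nonempty) (hA : ∀ i, (A i).Nonempty) :
    A₀.card ^ (n - 1) * (∑ i, A i).card ≤ ∏ i, (A₀ + A i).card := by
  rw [Nat.mul_comm]
  exact exact_ruzsa n hn A₀ A h₀
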